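/- Fix h ∈ ℝ. For q ∈ ℝ with q ∉ {0,1}, let g(q) be the 2×2 matrix [[1, h/(q−1)],[0,1]] and set R_{h,q} = (g(q) ⊗ g(q))⁻¹ R_q (g(q) ⊗ g(q)), where ⊗ denotes the Kronecker product. Then, as q → 1 (through values q ≠ 0,1), the matrix (1/2) R_{h,q} tends (entrywise) to the matrix R_h = [[1,−h,h,h²],[0,1,0,−h],[0,0,1,h],[0,0,0,1]]. -/

import Mathlib

open Kronecker Topology Filter

/-- Index map `(i,j) ∈ {1,2}×{1,2}` (0-based) to `Fin 4`, row-major: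
`(1,1),(1,2),(2,1),(2,2)`. -/
def pairIdx : Fin 2 × Fin 2 → Fin 4 := fun p => ⟨2 * p.1.1 + p.2.1, by omega⟩

/-- The 4×4 matrix
`R_q = [[q+q⁻¹,0,0,0],[0,2,q⁻¹−q,0],[0,q−q⁻¹,2,0],[0,0,0,q+q⁻¹]]` over `ℝ`. -/
noncomputable def Rq (q : ℝ) : Matrix (Fin 2 × Fin 2) (Fin 2 × Fin 2) ℝ :=
  Matrix.of fun p r =>
    (!![q + q⁻¹, 0,       0,       0;
        0,       2,       q⁻¹ - q, 0;
        0,       q - q⁻¹, 2,       0;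
        0,       0,       0,       q + q⁻¹] : Matrix (Fin 4) (Fin 4) ℝ)
      (pairIdx p) (pairIdx r)

/-- The 4×4 matrix `R_h = [[1,−h,h,h²],[0,1,0,−h],[0,0,1,h],[0,0,0,1]]`. -/
def Rh (h : ℝ) : Matrix (Fin 2 × Fin 2) (Fin 2 × Fin 2) ℝ :=
  Matrix.of fun p q =>
    (!![1, -h, h, h^2;
        0,  1, 0, -h;
        0,  0, 1, h;
        0,  0, 0, 1] : Matrix (Fin 4) (Fin 4) ℝ) (pairIdx p) (pairIdx q)

/-- The change-of-basis matrix `g(q) = [[1, h/(q−1)],[0,1]]`. -/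
noncomputable def g (h q : ℝ) : Matrix (Fin 2) (Fin 2) ℝ := !![1, h / (q - 1); 0, 1]

/-- `R_{h,q} = (g(q) ⊗ g(q))⁻¹ R_q (g(q) ⊗ g(q))`. -/
noncomputable def Rhq (h q : ℝ) : Matrix (Fin 2 × Fin 2) (Fin 2 × Fin 2) ℝ :=
  (g h q ⊗ₖ g h q)⁻¹ * Rq q * (g h q ⊗ₖ g h q)

/-- Explicit form of `(1/2) R_{h,q}` for `q ∉ {0,1}`. -/
noncomputable def Ehq (h q : ℝ) : Matrix (Fin 2 × Fin 2) (Fin 2 × Fin 2) ℝ :=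
  Matrix.of fun p r =>
    (!![(q + q⁻¹) / 2, -h / q,        h,             h ^ 2 / q;
        0,             1,             (q⁻¹ - q) / 2, -h;
        0,             (q - q⁻¹) / 2, 1,             h / q;
        0,             0,             0,             (q + q⁻¹) / 2] :
      Matrix (Fin 4) (Fin 4) ℝ) (pairIdx p) (pairIdx r)

lemma gg_inv (h q : ℝ) :
    (g h q ⊗ₖ g h q)⁻¹ = (!![1, -(h / (q - 1)); 0, 1] ⊗ₖ !![1, -(h / (q - 1)); 0, 1]) := by
  apply Matrix.inv_eq_left_inv
  ext ⟨i, j⟩ ⟨k, l⟩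
  fin_cases i <;> fin_cases j <;> fin_cases k <;> fin_cases l <;>
    · simp only [Matrix.mul_apply, Fintype.sum_prod_type, Fin.sum_univ_two,
        Matrix.kroneckerMap_apply, g, Matrix.one_apply, Fin.mk_zero, Fin.mk_one,
        Matrix.cons_val_zero, Matrix.cons_val_one, Matrix.head_cons, Prod.mk.injEq]
      norm_num

set_option maxHeartbeats 2000000 in
lemma half_Rhq_eq (h q : ℝ) (hq0 : q ≠ 0) (hq1 : q ≠ 1) :
    (1 / 2 : ℝ) • Rhq h q = Ehq h q := by
  have hq1' : q - 1 ≠ 0 := sub_ne_zero.mpr hq1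
  have p00 : pairIdx (0, 0) = 0 := rfl
  have p01 : pairIdx (0, 1) = 1 := rfl
  have p10 : pairIdx (1, 0) = 2 := rfl
  have p11 : pairIdx (1, 1) = 3 := rfl
  have hR : Rhq h q =
      (!![1, -(h / (q - 1)); 0, 1] ⊗ₖ !![1, -(h / (q - 1)); 0, 1]) * Rq q *
        (g h q ⊗ₖ g h q) := by
    rw [Rhq, gg_inv]
  ext ⟨i, j⟩ ⟨k, l⟩
  fin_cases i <;> fin_cases j <;> fin_cases k <;> fin_cases l <;>
    · simp only [hR, Matrix.smul_apply, Matrix.mul_apply, Fintype.sum_prod_type,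
        Fin.sum_univ_two, Matrix.kroneckerMap_apply, g, Rq, Ehq, Matrix.of_apply,
        Fin.mk_zero, Fin.mk_one, p00, p01, p10, p11, smul_eq_mul,
        Matrix.cons_val_zero, Matrix.cons_val_one, Matrix.head_cons,
        Matrix.cons_val_two, Matrix.cons_val_three, Matrix.tail_cons, Matrix.head_fin_const]
      field_simp
      all_goals first | ring1 | (left; ring1)

/-- As `q → 1` through values `q ∉ {0,1}`, the matrix `(1/2) R_{h,q}` tends
entrywise to `R_h`. -/
theorem tendsto_half_Rhq (h : ℝ) :
    Tendsto (fun q : ℝ => (1 / 2 : ℝ) • Rhq h q)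
      (𝓝[({0, 1} : Set ℝ)ᶜ] (1 : ℝ)) (𝓝 (Rh h)) := by
  have p00 : pairIdx (0, 0) = 0 := rfl
  have p01 : pairIdx (0, 1) = 1 := rfl
  have p10 : pairIdx (1, 0) = 2 := rfl
  have p11 : pairIdx (1, 1) = 3 := rfl
  have heq : ∀ q ∈ ({0, 1} : Set ℝ)ᶜ, (1 / 2 : ℝ) • Rhq h q = Ehq h q := by
    intro q hq
    simp only [Set.mem_compl_iff, Set.mem_insert_iff, Set.mem_singleton_iff, not_or] at hq
    exact half_Rhq_eq h q hq.1 hq.2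
  have h1 : Ehq h 1 = Rh h := by
    ext ⟨i, j⟩ ⟨k, l⟩
    fin_cases i <;> fin_cases j <;> fin_cases k <;> fin_cases l <;>
      · simp only [Ehq, Rh, Matrix.of_apply, Fin.mk_zero, Fin.mk_one, p00, p01, p10, p11,
          Matrix.cons_val_zero, Matrix.cons_val_one, Matrix.head_cons,
          Matrix.cons_val_two, Matrix.cons_val_three, Matrix.tail_cons, Matrix.head_fin_const]
        try norm_num
  have hc : Tendsto (Ehq h) (𝓝 (1 : ℝ)) (𝓝 (Ehq h 1)) := by
    refine tendsto_pi_nhds.mpr ?_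
    intro ⟨i, j⟩
    rw [tendsto_pi_nhds]
    intro ⟨k, l⟩
    have : ContinuousAt (fun q : ℝ => Ehq h q (i, j) (k, l)) 1 := by
      fin_cases i <;> fin_cases j <;> fin_cases k <;> fin_cases l <;>
        · simp only [Ehq, Matrix.of_apply, Fin.mk_zero, Fin.mk_one, p00, p01, p10, p11,
            Matrix.cons_val_zero, Matrix.cons_val_one, Matrix.head_cons,
            Matrix.cons_val_two, Matrix.cons_val_three, Matrix.tail_cons, Matrix.head_fin_const]
          fun_prop (disch := norm_num)
    exact this
  rw [← h1]
  exact Tendsto.congr' (eventually_nhdsWithin_of_forall fun q hq => (heq q hq).symm)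
    (hc.mono_left nhdsWithin_le_nhds)
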